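/- Let n be an even positive integer divisible by 3 with n ≥ 12, and let P = n/2 - 2. Then the number of ordered pairs (x, y) of odd integers with x, y ≥ 3, x + y = n, and 3 ∣ x or 3 ∣ y equals (P + 2)/3. -/
import Mathlib


def goldbachPairs (n : ℕ) : Finset (ℕ × ℕ) :=
  (Finset.range n ×ˢ Finset.range n).filter
    fun z => Odd z.1 ∧ Odd z.2 ∧ 3 ≤ z.1 ∧ 3 ≤ z.2 ∧ z.1 + z.2 = n

/-- If `n` is even, divisible by 3, `n ≥ 12`, and `P = n/2 - 2`, then the number of
ordered pairs of odd integers `≥ 3` summing to `n` with `3 ∣ x` or `3 ∣ y` is `(P+2)/3`. -/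
theorem stmt1 (n P : ℕ) (hn : Even n) (h3 : 3 ∣ n) (h12 : 12 ≤ n) (hP : P = n / 2 - 2) :
    ((goldbachPairs n).filter fun z => 3 ∣ z.1 ∨ 3 ∣ z.2).card = (P + 2) / 3 := by
  rw [Nat.even_iff] at hn
  have key : ((goldbachPairs n).filter fun z => 3 ∣ z.1 ∨ 3 ∣ z.2) =
      (Finset.range (n / 6)).image (fun k => (6 * k + 3, n - (6 * k + 3))) := by
    ext ⟨a, b⟩
    simp only [goldbachPairs, Finset.mem_filter, Finset.mem_product, Finset.mem_range,
      Finset.mem_image, Prod.mk.injEq]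
    constructor
    · rintro ⟨⟨⟨ha, hb⟩, hoa, hob, h3a, h3b, hsum⟩, hdvd⟩
      rw [Nat.odd_iff] at hoa hob
      have h3a' : 3 ∣ a := by
        rcases hdvd with h | h
        · exact h
        · omega
      exact ⟨a / 6, by omega, by omega, by omega⟩
    · rintro ⟨k, hk, h1, h2⟩
      refine ⟨⟨⟨by omega, by omega⟩, ?_, ?_, by omega, by omega, by omega⟩, by left; omega⟩
      · rw [Nat.odd_iff]; omega
      · rw [Nat.odd_iff]; omega
  rw [key, Finset.card_image_of_injOn, Finset.card_range]
  · omega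
  · intro x _ y _ h
    simp only [Prod.mk.injEq] at h
    omega
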